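/- arXiv:1405.2011 — 2 statements merged into one kernel-verified Lean document; each statement's English description precedes it below -/
import Mathlib

section
/- In the pipelined convergecast analysis: if each non-root node u in a rooted tree must send m_u messages to its parent, sends one unsent message per round whenever available, and d_u denotes the depth of the subtree rooted at u, then after r rounds node u has forwarded min(r − d_u, m_u) messages (where messages available to u include its own plus those received from children). -/
/-- Pipelined convergecast: in a rooted tree (children of `u` have smaller subtree
height `dep`), each node `u` must eventually send `mm u = own u + ∑_{v child} mm v`
messages to its parent; it sends one message per round whenever it still holds an
unsent message. Then after `r` rounds, `u` has sent at least `min(r − dep u, mm u)`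
messages. -/
theorem pipelined_convergecast {V : Type*} [DecidableEq V]
    (children : V → Finset V) (dep : V → ℕ)
    (hdep : ∀ u, ∀ v ∈ children u, dep v < dep u)
    (own mm : V → ℕ)
    (hm : ∀ u, mm u = own u + ∑ v ∈ children u, mm v)
    (sent : V → ℕ → ℕ)
    (hsent0 : ∀ u, sent u 0 = 0)
    (hmono : ∀ u r, sent u r ≤ sent u (r + 1))
    (hstep : ∀ u r, sent u (r + 1) ≤ sent u r + 1)
    (havail : ∀ u r, sent u (r + 1) = sent u r + 1 ∨
      own u + ∑ v ∈ children u, sent v r ≤ sent u r)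
    (hcap : ∀ u r, sent u r ≤ own u + ∑ v ∈ children u, sent v r) :
    ∀ u r, min (r - dep u) (mm u) ≤ sent u r := by
  have key : ∀ n, ∀ u, dep u < n → ∀ r, min (r - dep u) (mm u) ≤ sent u r := by
    intro n
    induction n with
    | zero => intro u h; omega
    | succ n ih =>
      intro u hu r
      induction r with
      | zero => simp [hsent0]
      | succ r ihr =>
        rcases havail u r with h | h
        · rw [h]
          have := Nat.add_le_add_right ihr 1
          omega
        · -- node had no unsent message at round r: it has sent everything available
          set K := r + 1 - dep u with hK
          have hv : ∀ v ∈ children u, min K (mm v) ≤ sent v r := by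
            intro v hvm
            have h1 := hdep u v hvm
            have h2 := ih v (by omega) r
            omega
          have hsum : min K (mm u) ≤ own u + ∑ v ∈ children u, min K (mm v) := by
            by_cases hex : ∃ v ∈ children u, K ≤ mm v
            · obtain ⟨v, hvm, hKv⟩ := hex
              have h1 : min K (mm v) ≤ ∑ w ∈ children u, min K (mm w) :=
                Finset.single_le_sum (f := fun w => min K (mm w)) (fun w _ => Nat.zero_le _) hvm
              omega
            · push_neg at hex
              have heq : ∑ v ∈ children u, min K (mm v) = ∑ v ∈ children u, mm v :=
                Finset.sum_congr rfl (fun v hvm => by have := hex v hvm; omega)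
              rw [heq, ← hm u]
              exact min_le_right _ _
          have hsum2 : ∑ v ∈ children u, min K (mm v) ≤ ∑ v ∈ children u, sent v r :=
            Finset.sum_le_sum hv
          have hmo := hmono u r
          omega
  intro u r
  exact key (dep u + 1) u (Nat.lt_succ_self _) r
end

section
/- A matroid/pipelining bound: convergecasting k forest edges over a BFS tree of depth D, where each node forwards one edge per round and discards cycle-closing edges, terminates in at most D + k rounds. -/
/-- Pipelined filtered convergecast over a BFS tree of depth `D`: if at most `k`
items survive filtering at every node and each node forwards one available item per
round, then within `D + k` rounds the root `R` has received all `mm R` surviving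
items. -/
theorem filtered_convergecast_time {V : Type*} [DecidableEq V]
    (children : V → Finset V) (dep : V → ℕ)
    (hdep : ∀ u, ∀ v ∈ children u, dep v < dep u)
    (own mm : V → ℕ)
    (hm : ∀ u, mm u = own u + ∑ v ∈ children u, mm v)
    (sent : V → ℕ → ℕ)
    (hsent0 : ∀ u, sent u 0 = 0)
    (hmono : ∀ u r, sent u r ≤ sent u (r + 1))
    (hstep : ∀ u r, sent u (r + 1) ≤ sent u r + 1)
    (havail : ∀ u r, sent u (r + 1) = sent u r + 1 ∨
      own u + ∑ v ∈ children u, sent v r ≤ sent u r)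
    (hcap : ∀ u r, sent u r ≤ own u + ∑ v ∈ children u, sent v r)
    (R : V) (D k : ℕ) (hR : dep R ≤ D) (hk : ∀ u, mm u ≤ k) :
    own R + ∑ v ∈ children R, sent v (D + k) = mm R := by
  have upper : ∀ n u, dep u < n → ∀ r, sent u r ≤ mm u := by
    intro n
    induction n with
    | zero => intro u h; omega
    | succ n ih =>
      intro u h r
      calc sent u r ≤ own u + ∑ v ∈ children u, sent v r := hcap u r
        _ ≤ own u + ∑ v ∈ children u, mm v := by
            gcongr with v hv
            exact ih v (by have := hdep u v hv; omega) r
        _ = mm u := (hm u).symm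
  have lower : ∀ t u, min (mm u) (t - dep u) ≤ sent u t := by
    intro t
    induction t with
    | zero => intro u; omega
    | succ t ih =>
      intro u
      by_cases hdu : dep u ≤ t
      · rcases havail u t with h1 | h2
        · have := ih u; omega
        · by_cases hall : ∀ v ∈ children u, mm v ≤ t - dep v
          · have hmu : mm u ≤ sent u t := by
              rw [hm u] at *
              calc own u + ∑ v ∈ children u, mm v
                  ≤ own u + ∑ v ∈ children u, sent v t := by
                    gcongr with v hv
                    have := ih v
                    have := hall v hv
                    omega
                _ ≤ sent u t := h2
            have := hmono u t; omega
          · push_neg at hall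
            obtain ⟨v, hv, hlt⟩ := hall
            have h3 : sent v t ≤ ∑ w ∈ children u, sent w t :=
              Finset.single_le_sum (f := fun w => sent w t) (fun w _ => Nat.zero_le _) hv
            have h4 := ih v
            have h5 := hdep u v hv
            have h6 := hmono u t
            omega
      · omega
  have hkey : ∀ v ∈ children R, sent v (D + k) = mm v := by
    intro v hv
    have h1 := lower (D + k) v
    have h2 := upper (dep v + 1) v (Nat.lt_succ_self _) (D + k)
    have h3 := hdep R v hv
    have h4 := hk v
    omega
  rw [hm R, Finset.sum_congr rfl hkey]
end
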